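/- Let Q be symmetric positive definite, J : ℝⁿ → ℝ^{n×n} continuous with J(z)ᵀ = -J(z), suppose z ↦ J(z)Q is Lipschitz with constant L w.r.t. the Q-norm, and suppose y₁ satisfies y₁ = C((h/2)J((y₀+y₁)/2)Q)y₀. Then for any x ∈ ℝⁿ the Cayley iterate w = C((h/2)J((y₀+x)/2)Q)y₀ satisfies ‖w - y₁‖_Q ≤ (hL‖y₀‖_Q/2)·‖x - y₁‖_Q, and ‖w‖_Q = ‖y₀‖_Q. -/

import Mathlib

open Matrix

/-- The `Q`-norm of a vector, `‖x‖_Q = √(xᵀ Q x)`. -/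
noncomputable def qnorm {n : ℕ} (Q : Matrix (Fin n) (Fin n) ℝ) (x : Fin n → ℝ) : ℝ :=
  Real.sqrt (x ⬝ᵥ Q.mulVec x)

/-- The operator norm on `ℝ^{n×n}` induced by the `Q`-norm. -/
noncomputable def qOpNorm {n : ℕ} (Q M : Matrix (Fin n) (Fin n) ℝ) : ℝ :=
  sInf {c : ℝ | 0 ≤ c ∧ ∀ x : Fin n → ℝ, qnorm Q (M.mulVec x) ≤ c * qnorm Q x}

/-- The Cayley transform `C(A) = (I - A)⁻¹ (I + A)`. -/
noncomputable def cayley {n : ℕ} (A : Matrix (Fin n) (Fin n) ℝ) : Matrix (Fin n) (Fin n) ℝ :=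
  (1 - A)⁻¹ * (1 + A)

/-- The midpoint-rule fixed point map `Φ_h(x) = C((h/2) J((y₀+x)/2) Q) y₀`. -/
noncomputable def Phi {n : ℕ} (Q : Matrix (Fin n) (Fin n) ℝ)
    (J : (Fin n → ℝ) → Matrix (Fin n) (Fin n) ℝ) (y₀ : Fin n → ℝ) (h : ℝ)
    (x : Fin n → ℝ) : Fin n → ℝ :=
  (cayley ((h / 2) • (J ((1 / 2 : ℝ) • (y₀ + x)) * Q))).mulVec y₀

namespace CayleyAux

variable {n : ℕ} {Q A B M : Matrix (Fin n) (Fin n) ℝ}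

lemma qnorm_nonneg (Q : Matrix (Fin n) (Fin n) ℝ) (x : Fin n → ℝ) : 0 ≤ qnorm Q x :=
  Real.sqrt_nonneg _

lemma dot_nonneg (hQ : Q.PosDef) (x : Fin n → ℝ) : 0 ≤ x ⬝ᵥ Q *ᵥ x := by
  simpa using hQ.posSemidef.dotProduct_mulVec_nonneg x

lemma qnorm_smul (Q : Matrix (Fin n) (Fin n) ℝ) (c : ℝ) (x : Fin n → ℝ) :
    qnorm Q (c • x) = |c| * qnorm Q x := by
  unfold qnorm
  rw [smul_dotProduct, mulVec_smul, dotProduct_smul, smul_eq_mul, smul_eq_mul, ← mul_assoc,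
    ← sq, Real.sqrt_mul (sq_nonneg c), Real.sqrt_sq_eq_abs]

lemma transpose_eq (hQ : Q.PosDef) : Qᵀ = Q := by
  have := hQ.isHermitian
  simpa [Matrix.IsHermitian, conjTranspose_eq_transpose_of_trivial] using this

lemma dot_symm (hQ : Q.PosDef) (x y : Fin n → ℝ) : x ⬝ᵥ Q *ᵥ y = y ⬝ᵥ Q *ᵥ x := by
  rw [dotProduct_mulVec, ← mulVec_transpose, transpose_eq hQ, dotProduct_comm]

lemma dot_mulVec_left (Q A : Matrix (Fin n) (Fin n) ℝ) (x y : Fin n → ℝ) :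
    (A *ᵥ x) ⬝ᵥ Q *ᵥ y = x ⬝ᵥ (Aᵀ * Q) *ᵥ y := by
  rw [dotProduct_mulVec, vecMul_mulVec, ← dotProduct_mulVec]

/-- Cross term vanishes for `Q`-skew matrices. -/
lemma cross (hQ : Q.PosDef) (hA : Aᵀ * Q = -(Q * A)) (v : Fin n → ℝ) :
    v ⬝ᵥ Q *ᵥ (A *ᵥ v) = 0 := by
  have h1 : (A *ᵥ v) ⬝ᵥ Q *ᵥ v = -(v ⬝ᵥ Q *ᵥ (A *ᵥ v)) := by
    rw [dot_mulVec_left, hA, neg_mulVec, dotProduct_neg, mulVec_mulVec]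
  have h2 := dot_symm hQ v (A *ᵥ v)
  linarith [h1, h2]

/-- Expansion of `‖(1 + ε A) v‖_Q²` for `Q`-skew `A`. -/
lemma expand (hQ : Q.PosDef) (hA : Aᵀ * Q = -(Q * A)) (ε : ℝ) (v : Fin n → ℝ) :
    ((1 + ε • A) *ᵥ v) ⬝ᵥ Q *ᵥ ((1 + ε • A) *ᵥ v)
      = v ⬝ᵥ Q *ᵥ v + (ε • (A *ᵥ v)) ⬝ᵥ Q *ᵥ (ε • (A *ᵥ v)) := by
  have hc := cross hQ hA v
  have hc' : (A *ᵥ v) ⬝ᵥ Q *ᵥ v = 0 := by rw [dot_symm hQ]; exact hc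
  rw [add_mulVec, one_mulVec, smul_mulVec]
  rw [mulVec_add, dotProduct_add, add_dotProduct, add_dotProduct]
  rw [mulVec_smul, dotProduct_smul, smul_dotProduct, smul_dotProduct, dotProduct_smul]
  rw [hc, hc']
  simp

lemma expand_add (hQ : Q.PosDef) (hA : Aᵀ * Q = -(Q * A)) (v : Fin n → ℝ) :
    ((1 + A) *ᵥ v) ⬝ᵥ Q *ᵥ ((1 + A) *ᵥ v)
      = v ⬝ᵥ Q *ᵥ v + (A *ᵥ v) ⬝ᵥ Q *ᵥ (A *ᵥ v) := by
  simpa using expand hQ hA 1 v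

lemma expand_sub (hQ : Q.PosDef) (hA : Aᵀ * Q = -(Q * A)) (v : Fin n → ℝ) :
    ((1 - A) *ᵥ v) ⬝ᵥ Q *ᵥ ((1 - A) *ᵥ v)
      = v ⬝ᵥ Q *ᵥ v + (A *ᵥ v) ⬝ᵥ Q *ᵥ (A *ᵥ v) := by
  have h1 : (1 : Matrix (Fin n) (Fin n) ℝ) - A = 1 + (-1 : ℝ) • A := by
    rw [neg_one_smul, sub_eq_add_neg]
  rw [h1, expand hQ hA (-1) v, smul_dotProduct, mulVec_smul, dotProduct_smul]
  simp [smul_eq_mul]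

/-- For `Q`-skew `A`, `‖(1+A)v‖_Q = ‖(1-A)v‖_Q`. -/
lemma qnorm_add_eq_sub (hQ : Q.PosDef) (hA : Aᵀ * Q = -(Q * A)) (v : Fin n → ℝ) :
    qnorm Q ((1 + A) *ᵥ v) = qnorm Q ((1 - A) *ᵥ v) := by
  unfold qnorm
  rw [expand_add hQ hA, expand_sub hQ hA]

/-- For `Q`-skew `A`, `‖v‖_Q ≤ ‖(1-A)v‖_Q`. -/
lemma qnorm_le_sub (hQ : Q.PosDef) (hA : Aᵀ * Q = -(Q * A)) (v : Fin n → ℝ) :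
    qnorm Q v ≤ qnorm Q ((1 - A) *ᵥ v) := by
  unfold qnorm
  apply Real.sqrt_le_sqrt
  rw [expand_sub hQ hA]
  have := dot_nonneg hQ (A *ᵥ v)
  linarith

/-- For `Q`-skew `A`, `1 - A` is invertible. -/
lemma isUnit_det_one_sub (hQ : Q.PosDef) (hA : Aᵀ * Q = -(Q * A)) :
    IsUnit (1 - A).det := by
  rw [← Matrix.isUnit_iff_isUnit_det, ← Matrix.mulVec_injective_iff_isUnit]
  intro v w hvw
  by_contra hne
  have hvw0 : v - w ≠ 0 := sub_ne_zero.mpr hne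
  have hsub : (1 - A) *ᵥ (v - w) = 0 := by
    rw [mulVec_sub, hvw, sub_self]
  have h1 : ((1 - A) *ᵥ (v - w)) ⬝ᵥ Q *ᵥ ((1 - A) *ᵥ (v - w)) = 0 := by rw [hsub]; simp
  rw [expand_sub hQ hA] at h1
  have h2 : 0 < (v - w) ⬝ᵥ Q *ᵥ (v - w) := by simpa using hQ.dotProduct_mulVec_pos hvw0
  have h3 := dot_nonneg hQ (A *ᵥ (v - w))
  linarith

lemma inv_contract (hQ : Q.PosDef) (hA : Aᵀ * Q = -(Q * A)) (w : Fin n → ℝ) :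
    qnorm Q ((1 - A)⁻¹ *ᵥ w) ≤ qnorm Q w := by
  have h := qnorm_le_sub hQ hA ((1 - A)⁻¹ *ᵥ w)
  rwa [mulVec_mulVec, Matrix.mul_nonsing_inv _ (isUnit_det_one_sub hQ hA), one_mulVec] at h

/-- `C(A) = (1+A)(1-A)⁻¹` for invertible `1 - A`. -/
lemma cayley_comm (hd : IsUnit (1 - A).det) : cayley A = (1 + A) * (1 - A)⁻¹ := by
  have h1 := Matrix.mul_nonsing_inv _ hd
  have h2 := Matrix.nonsing_inv_mul _ hd
  have comm : (1 + A) * (1 - A) = (1 - A) * (1 + A) := by noncomm_ring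
  calc (1 - A)⁻¹ * (1 + A)
      = (1 - A)⁻¹ * (1 + A) * ((1 - A) * (1 - A)⁻¹) := by rw [h1, mul_one]
    _ = (1 - A)⁻¹ * ((1 + A) * (1 - A)) * (1 - A)⁻¹ := by simp only [Matrix.mul_assoc]
    _ = (1 - A)⁻¹ * ((1 - A) * (1 + A)) * (1 - A)⁻¹ := by rw [comm]
    _ = (1 - A)⁻¹ * (1 - A) * ((1 + A) * (1 - A)⁻¹) := by simp only [Matrix.mul_assoc]
    _ = (1 + A) * (1 - A)⁻¹ := by rw [h2, one_mul]

/-- The Cayley difference formula. -/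
lemma cayley_sub (hdA : IsUnit (1 - A).det) (hdB : IsUnit (1 - B).det) :
    cayley A - cayley B = (1 - A)⁻¹ * ((2 : ℝ) • (A - B)) * (1 - B)⁻¹ := by
  have e1 : (1 - A) * cayley A = 1 + A := by
    unfold cayley
    rw [← Matrix.mul_assoc, Matrix.mul_nonsing_inv _ hdA, one_mul]
  have commB : (1 + B) * (1 - B) = (1 - B) * (1 + B) := by noncomm_ring
  have e3 : cayley B * (1 - B) = 1 + B := by
    unfold cayley
    rw [Matrix.mul_assoc, commB, ← Matrix.mul_assoc, Matrix.nonsing_inv_mul _ hdB, one_mul]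
  have key : (1 - A) * (cayley A - cayley B) * (1 - B) = (2 : ℝ) • (A - B) := by
    have e4 : (1 - A) * (cayley A - cayley B) * (1 - B)
        = ((1 - A) * cayley A) * (1 - B) - (1 - A) * (cayley B * (1 - B)) := by
      noncomm_ring
    rw [e4, e1, e3, two_smul]
    noncomm_ring
  calc cayley A - cayley B
      = (1 - A)⁻¹ * (1 - A) * (cayley A - cayley B) * ((1 - B) * (1 - B)⁻¹) := by
        rw [Matrix.nonsing_inv_mul _ hdA, Matrix.mul_nonsing_inv _ hdB, one_mul, mul_one]
    _ = (1 - A)⁻¹ * ((1 - A) * (cayley A - cayley B) * (1 - B)) * (1 - B)⁻¹ := by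
        simp only [Matrix.mul_assoc]
    _ = (1 - A)⁻¹ * ((2 : ℝ) • (A - B)) * (1 - B)⁻¹ := by rw [key]

lemma bound_aux {E : Type*} [NormedAddCommGroup E] [NormedSpace ℝ E] [FiniteDimensional ℝ E]
    (f : E →ₗ[ℝ] E) : ∃ C, 0 ≤ C ∧ ∀ x, ‖f x‖ ≤ C * ‖x‖ := by
  have hf : Continuous f := f.continuous_of_finiteDimensional
  obtain ⟨C, hC, hCb⟩ := ContinuousLinearMap.bound ⟨f, hf⟩
  exact ⟨C, hC.le, hCb⟩

lemma qopSet_nonempty (hQ : Q.PosDef) (M : Matrix (Fin n) (Fin n) ℝ) :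
    {c : ℝ | 0 ≤ c ∧ ∀ x : Fin n → ℝ, qnorm Q (M.mulVec x) ≤ c * qnorm Q x}.Nonempty := by
  let nacg := Matrix.toNormedAddCommGroup Q hQ
  let ips := Matrix.toInnerProductSpace Q hQ.posSemidef
  have hq : ∀ x : Fin n → ℝ, @norm _ nacg.toNorm x = qnorm Q x := by
    intro x
    show Real.sqrt (RCLike.re ((Q *ᵥ x) ⬝ᵥ star x)) = _
    simp [qnorm, dotProduct_comm]
  obtain ⟨C, hC0, hCb⟩ := @bound_aux (Fin n → ℝ) nacg ips.toNormedSpace (by infer_instance)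
    M.mulVecLin
  refine ⟨C, hC0, fun x => ?_⟩
  have := hCb x
  rw [hq, hq] at this
  simpa using this

lemma qOpNorm_nonneg (hQ : Q.PosDef) (M : Matrix (Fin n) (Fin n) ℝ) : 0 ≤ qOpNorm Q M :=
  le_csInf (qopSet_nonempty hQ M) fun _ hc => hc.1

lemma qnorm_mulVec_le (hQ : Q.PosDef) (M : Matrix (Fin n) (Fin n) ℝ) (v : Fin n → ℝ) :
    qnorm Q (M *ᵥ v) ≤ qOpNorm Q M * qnorm Q v := by
  have hne := qopSet_nonempty hQ M
  by_cases hv : v = 0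
  · have h0 : 0 ≤ qOpNorm Q M := qOpNorm_nonneg hQ M
    subst hv
    simp only [mulVec_zero]
    have hz : qnorm Q (0 : Fin n → ℝ) = 0 := by simp [qnorm]
    rw [hz]; nlinarith
  · have hpos : 0 < qnorm Q v := Real.sqrt_pos.mpr (by simpa using hQ.dotProduct_mulVec_pos hv)
    rw [← div_le_iff₀ hpos]
    exact le_csInf hne fun c hc => (div_le_iff₀ hpos).mpr (hc.2 v)

/-- Skewness in the `Q`-inner product of `c • (J z * Q)` for skew `J z`. -/
lemma skew_smul (hQ : Q.PosDef) {Jz : Matrix (Fin n) (Fin n) ℝ} (hJz : Jzᵀ = -Jz) (c : ℝ) :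
    (c • (Jz * Q))ᵀ * Q = -(Q * (c • (Jz * Q))) := by
  rw [transpose_smul, transpose_mul, transpose_eq hQ, hJz]
  simp only [Matrix.smul_mul, Matrix.mul_smul, Matrix.mul_neg, Matrix.neg_mul, Matrix.mul_assoc,
    smul_neg]

end CayleyAux

open CayleyAux in
/-- Cayley iterates: if `y₁` is the midpoint-rule solution (fixed point of
`Φ_h`) and `J·Q` is `L`-Lipschitz w.r.t. the `Q`-norms, then for any `x` the
Cayley iterate `w = Φ_h(x)` satisfies
`‖w - y₁‖_Q ≤ (hL‖y₀‖_Q/2)‖x - y₁‖_Q` and `‖w‖_Q = ‖y₀‖_Q`. -/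
theorem stmt19 {n : ℕ} (Q : Matrix (Fin n) (Fin n) ℝ) (hQ : Q.PosDef)
    (J : (Fin n → ℝ) → Matrix (Fin n) (Fin n) ℝ) (hJcont : Continuous J)
    (hJ : ∀ z, (J z)ᵀ = -(J z))
    (L : ℝ)
    (hLip : ∀ z z' : Fin n → ℝ,
      qOpNorm Q (J z * Q - J z' * Q) ≤ L * qnorm Q (z - z'))
    (y₀ y₁ : Fin n → ℝ) (h : ℝ) (hh : 0 < h)
    (hy₁ : y₁ = Phi Q J y₀ h y₁) :
    ∀ x : Fin n → ℝ,
      qnorm Q (Phi Q J y₀ h x - y₁) ≤ (h * L * qnorm Q y₀ / 2) * qnorm Q (x - y₁) ∧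
      qnorm Q (Phi Q J y₀ h x) = qnorm Q y₀ := by
  intro x
  set z : Fin n → ℝ := (1 / 2 : ℝ) • (y₀ + x) with hz
  set z' : Fin n → ℝ := (1 / 2 : ℝ) • (y₀ + y₁) with hz'
  set A : Matrix (Fin n) (Fin n) ℝ := (h / 2) • (J z * Q) with hA
  set B : Matrix (Fin n) (Fin n) ℝ := (h / 2) • (J z' * Q) with hB
  have hskA : Aᵀ * Q = -(Q * A) := skew_smul hQ (hJ z) (h / 2)
  have hskB : Bᵀ * Q = -(Q * B) := skew_smul hQ (hJ z') (h / 2)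
  have hdA : IsUnit (1 - A).det := isUnit_det_one_sub hQ hskA
  have hdB : IsUnit (1 - B).det := isUnit_det_one_sub hQ hskB
  have hwx : Phi Q J y₀ h x = (cayley A).mulVec y₀ := rfl
  have hwy : y₁ = (cayley B).mulVec y₀ := hy₁
  constructor
  · -- contraction estimate
    have hsub : Phi Q J y₀ h x - y₁ = (cayley A - cayley B) *ᵥ y₀ := by
      rw [hwx, hwy, Matrix.sub_mulVec]
    set t : Fin n → ℝ := (1 - B)⁻¹ *ᵥ y₀ with ht
    set D : Matrix (Fin n) (Fin n) ℝ := J z * Q - J z' * Q with hD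
    have hAB : (2 : ℝ) • (A - B) = h • D := by
      rw [hA, hB, hD, ← smul_sub, smul_smul]
      congr 1
      ring
    have hkey : Phi Q J y₀ h x - y₁ = (1 - A)⁻¹ *ᵥ (h • (D *ᵥ t)) := by
      rw [hsub, cayley_sub hdA hdB, hAB]
      rw [← mulVec_mulVec, ← mulVec_mulVec, smul_mulVec]
    have hzz : z - z' = (1 / 2 : ℝ) • (x - y₁) := by
      rw [hz, hz', ← smul_sub]
      congr 1
      abel
    have hqzz : qnorm Q (z - z') = (1 / 2 : ℝ) * qnorm Q (x - y₁) := by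
      rw [hzz, qnorm_smul]
      norm_num
    have hbound1 : qnorm Q (Phi Q J y₀ h x - y₁) ≤ qnorm Q (h • (D *ᵥ t)) := by
      rw [hkey]; exact inv_contract hQ hskA _
    have hbound2 : qnorm Q (h • (D *ᵥ t)) = h * qnorm Q (D *ᵥ t) := by
      rw [qnorm_smul, abs_of_pos hh]
    have hbound3 : qnorm Q (D *ᵥ t) ≤ qOpNorm Q D * qnorm Q t := qnorm_mulVec_le hQ D t
    have hbound4 : qOpNorm Q D ≤ L * ((1 / 2 : ℝ) * qnorm Q (x - y₁)) := by
      rw [← hqzz]; exact hLip z z'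
    have hbound5 : qnorm Q t ≤ qnorm Q y₀ := by
      have := inv_contract hQ hskB y₀
      have hy0 : (1 - B)⁻¹ *ᵥ y₀ = t := rfl
      rwa [hy0] at this
    have hOD : 0 ≤ qOpNorm Q D := qOpNorm_nonneg hQ D
    have htn : 0 ≤ qnorm Q t := qnorm_nonneg Q t
    have hOD2 : 0 ≤ L * ((1 / 2 : ℝ) * qnorm Q (x - y₁)) := le_trans hOD hbound4
    have hmul : qOpNorm Q D * qnorm Q t ≤ (L * ((1 / 2 : ℝ) * qnorm Q (x - y₁))) * qnorm Q y₀ :=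
      mul_le_mul hbound4 hbound5 htn hOD2
    calc qnorm Q (Phi Q J y₀ h x - y₁)
        ≤ h * qnorm Q (D *ᵥ t) := by rw [← hbound2]; exact hbound1
      _ ≤ h * ((L * ((1 / 2 : ℝ) * qnorm Q (x - y₁))) * qnorm Q y₀) := by
          apply mul_le_mul_of_nonneg_left _ hh.le
          exact le_trans hbound3 hmul
      _ = (h * L * qnorm Q y₀ / 2) * qnorm Q (x - y₁) := by ring
  · -- energy preservation
    rw [hwx, cayley_comm hdA, ← mulVec_mulVec]
    set u : Fin n → ℝ := (1 - A)⁻¹ *ᵥ y₀ with hu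
    have hy0 : y₀ = (1 - A) *ᵥ u := by
      rw [hu, mulVec_mulVec, Matrix.mul_nonsing_inv _ hdA, one_mulVec]
    calc qnorm Q ((1 + A) *ᵥ u) = qnorm Q ((1 - A) *ᵥ u) := qnorm_add_eq_sub hQ hskA u
      _ = qnorm Q y₀ := by rw [← hy0]
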